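/- In the type A_2 coefficient dynamics over the universal semifield, the Y-seed mutation sequence μ_1, μ_2, μ_1, μ_2, μ_1 starting from the Y-seed ((y_1, y_2), B) with B = [[0,1],[-1,0]] returns, after these five mutations, the initial Y-seed with the two coordinates and the sign of B swapped; hence applying the five mutations twice (ten mutations total) returns exactly the initial Y-seed. -/

import Mathlib

/-- The field `ℚ(y₁, y₂)`, with ordinary addition playing the role of `⊕`. -/
abbrev F19 : Type := FractionRing (MvPolynomial (Fin 2) ℚ)

/-- Matrix mutation in direction `k`. -/
def matMut (B : Matrix (Fin 2) (Fin 2) ℤ) (k : Fin 2) : Matrix (Fin 2) (Fin 2) ℤ :=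
  Matrix.of fun i j =>
    if i = k ∨ j = k then -B i j
    else B i j + max (B i k) 0 * max (B k j) 0 - max (-B i k) 0 * max (-B k j) 0

/-- Y-seed mutation `μ_k` of a Y-seed `((y₁, y₂), B)` over `ℚ(y₁, y₂)`:
`y'_k = y_k⁻¹`, `y'_j = y_j y_k^{[b_kj]₊} (y_k + 1)^{-b_kj}` for `j ≠ k`, and
`B` mutates by matrix mutation. -/
noncomputable def muY (s : (Fin 2 → F19) × Matrix (Fin 2) (Fin 2) ℤ) (k : Fin 2) :
    (Fin 2 → F19) × Matrix (Fin 2) (Fin 2) ℤ :=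
  (fun j => if j = k then (s.1 k)⁻¹
    else s.1 j * (s.1 k) ^ (max (s.2 k j) 0) * (s.1 k + 1) ^ (-(s.2 k j)),
   matMut s.2 k)

section steps
set_option linter.unusedSectionVars false
variable (a b : F19) (ha : a ≠ 0) (hb : b ≠ 0) (h1 : a + 1 ≠ 0) (h2 : b + 1 ≠ 0)
  (h3 : a * b + a + 1 ≠ 0)
include ha hb h1 h2 h3

lemma stepA1 : muY (![a,b], !![0,1;-1,0]) 0 = (![a⁻¹, b*a*(a+1)⁻¹], !![0,-1;1,0]) := by
  refine Prod.ext ?_ (show matMut !![0,1;-1,0] 0 = !![0,-1;1,0] by decide)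
  funext j; fin_cases j <;> norm_num [muY]

lemma stepA2 : muY (![a⁻¹, b*a*(a+1)⁻¹], !![0,-1;1,0]) 1
    = (![b*(a*b+a+1)⁻¹, (a+1)*(a*b)⁻¹], !![0,1;-1,0]) := by
  have e : b*a*(a+1)⁻¹ + 1 = (a*b+a+1)*(a+1)⁻¹ := by field_simp <;> ring_nf
  refine Prod.ext ?_ (show matMut !![0,-1;1,0] 1 = !![0,1;-1,0] by decide)
  funext j; fin_cases j
  · norm_num [muY]; rw [e]; field_simp <;> ring_nf
  · norm_num [muY]; field_simp; exact Or.inl trivial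

lemma stepA3 : muY (![b*(a*b+a+1)⁻¹, (a+1)*(a*b)⁻¹], !![0,1;-1,0]) 0
    = (![(a*b+a+1)*b⁻¹, (a*(b+1))⁻¹], !![0,-1;1,0]) := by
  have e : b*(a*b+a+1)⁻¹ + 1 = ((a+1)*(b+1))*(a*b+a+1)⁻¹ := by
    field_simp [show a*(b+1)+1 ≠ 0 by intro h; apply h3; linear_combination h] <;> ring_nf
  refine Prod.ext ?_ (show matMut !![0,1;-1,0] 0 = !![0,-1;1,0] by decide)
  funext j; fin_cases j
  · norm_num [muY]
  · norm_num [muY]; rw [e]; field_simp [show a*(b+1)+1 ≠ 0 by intro h; apply h3; linear_combination h] <;> ring_nf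

lemma stepA4 : muY (![(a*b+a+1)*b⁻¹, (a*(b+1))⁻¹], !![0,-1;1,0]) 1
    = (![b⁻¹, a*(b+1)], !![0,1;-1,0]) := by
  have e : (b+1)⁻¹ * a⁻¹ + 1 = (a*b+a+1)*((b+1)⁻¹*a⁻¹) := by field_simp <;> ring_nf
  refine Prod.ext ?_ (show matMut !![0,-1;1,0] 1 = !![0,1;-1,0] by decide)
  funext j; fin_cases j
  · norm_num [muY]; rw [e]; field_simp [show a*(b+1)+1 ≠ 0 by intro h; apply h3; linear_combination h] <;> ring_nf
  · norm_num [muY]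

lemma stepA5 : muY (![b⁻¹, a*(b+1)], !![0,1;-1,0]) 0 = (![b, a], !![0,-1;1,0]) := by
  have e : b⁻¹ + 1 = (b+1)*b⁻¹ := by field_simp <;> ring_nf
  refine Prod.ext ?_ (show matMut !![0,1;-1,0] 0 = !![0,-1;1,0] by decide)
  funext j; fin_cases j
  · norm_num [muY]
  · norm_num [muY]; rw [e]; field_simp <;> ring_nf

lemma stepB1 : muY (![b, a], !![0,-1;1,0]) 0 = (![b⁻¹, a*(b+1)], !![0,1;-1,0]) := by
  refine Prod.ext ?_ (show matMut !![0,-1;1,0] 0 = !![0,1;-1,0] by decide)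
  funext j; fin_cases j <;> norm_num [muY]

lemma stepB2 : muY (![b⁻¹, a*(b+1)], !![0,1;-1,0]) 1
    = (![(a*b+a+1)*b⁻¹, (a*(b+1))⁻¹], !![0,-1;1,0]) := by
  refine Prod.ext ?_ (show matMut !![0,1;-1,0] 1 = !![0,-1;1,0] by decide)
  funext j; fin_cases j <;> norm_num [muY]
  field_simp <;> ring_nf

lemma stepB3 : muY (![(a*b+a+1)*b⁻¹, (a*(b+1))⁻¹], !![0,-1;1,0]) 0
    = (![b*(a*b+a+1)⁻¹, (a+1)*(a*b)⁻¹], !![0,1;-1,0]) := by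
  refine Prod.ext ?_ (show matMut !![0,-1;1,0] 0 = !![0,1;-1,0] by decide)
  funext j; fin_cases j <;> norm_num [muY] <;> field_simp <;> ring_nf

lemma stepB4 : muY (![b*(a*b+a+1)⁻¹, (a+1)*(a*b)⁻¹], !![0,1;-1,0]) 1
    = (![a⁻¹, b*a*(a+1)⁻¹], !![0,-1;1,0]) := by
  refine Prod.ext ?_ (show matMut !![0,1;-1,0] 1 = !![0,-1;1,0] by decide)
  funext j; fin_cases j
  · norm_num [muY]; field_simp [show a*(b+1)+1 ≠ 0 by intro h; apply h3; linear_combination h] <;> ring_nf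
  · norm_num [muY]; exact Or.inl (by ring)

lemma stepB5 : muY (![a⁻¹, b*a*(a+1)⁻¹], !![0,-1;1,0]) 0 = (![a, b], !![0,1;-1,0]) := by
  refine Prod.ext ?_ (show matMut !![0,-1;1,0] 0 = !![0,1;-1,0] by decide)
  funext j; fin_cases j <;> norm_num [muY] <;> field_simp <;> ring_nf

end steps

lemma F19_map_ne_zero {p : MvPolynomial (Fin 2) ℚ} (hp : p ≠ 0) :
    algebraMap (MvPolynomial (Fin 2) ℚ) F19 p ≠ 0 := by
  intro h
  exact hp ((map_eq_zero_iff _ (IsFractionRing.injective (MvPolynomial (Fin 2) ℚ) F19)).mp h)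

lemma constCoeff_ne_zero {p : MvPolynomial (Fin 2) ℚ}
    (hp : MvPolynomial.constantCoeff p ≠ 0) : p ≠ 0 := by
  intro h; exact hp (by rw [h]; simp)

/-- In type A₂ coefficient dynamics, the Y-seed mutation sequence
`μ₁, μ₂, μ₁, μ₂, μ₁` applied to `((y₁, y₂), B)` with `B = [[0,1],[-1,0]]`
returns the initial Y-seed with the two coordinates and the sign of `B`
swapped; hence ten mutations return exactly the initial Y-seed. -/
theorem typeA2_coefficient_period
    : let y : Fin 2 → F19 :=
        fun i => algebraMap (MvPolynomial (Fin 2) ℚ) F19 (MvPolynomial.X i)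
      let B : Matrix (Fin 2) (Fin 2) ℤ := !![0, 1; -1, 0]
      let s0 := (y, B)
      let s5 := muY (muY (muY (muY (muY s0 0) 1) 0) 1) 0
      (s5.1 0 = y 1 ∧ s5.1 1 = y 0 ∧ s5.2 = -B) ∧
      muY (muY (muY (muY (muY s5 0) 1) 0) 1) 0 = s0 := by
  intro y B s0 s5
  set a : F19 := y 0 with hay
  set b : F19 := y 1 with hby
  have ha : a ≠ 0 := F19_map_ne_zero (MvPolynomial.X_ne_zero 0)
  have hb : b ≠ 0 := F19_map_ne_zero (MvPolynomial.X_ne_zero 1)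
  have h1 : a + 1 ≠ 0 := by
    have : a + 1 = algebraMap (MvPolynomial (Fin 2) ℚ) F19 (MvPolynomial.X 0 + 1) := by
      simp [hay, y, map_add, map_one]
    rw [this]
    exact F19_map_ne_zero (constCoeff_ne_zero (by simp))
  have h2 : b + 1 ≠ 0 := by
    have : b + 1 = algebraMap (MvPolynomial (Fin 2) ℚ) F19 (MvPolynomial.X 1 + 1) := by
      simp [hby, y, map_add, map_one]
    rw [this]
    exact F19_map_ne_zero (constCoeff_ne_zero (by simp))
  have h3 : a * b + a + 1 ≠ 0 := by
    have : a * b + a + 1 = algebraMap (MvPolynomial (Fin 2) ℚ) F19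
        (MvPolynomial.X 0 * MvPolynomial.X 1 + MvPolynomial.X 0 + 1) := by
      simp [hay, hby, y, map_add, map_mul, map_one]
    rw [this]
    exact F19_map_ne_zero (constCoeff_ne_zero (by simp))
  have hy : y = ![a, b] := by
    funext i; fin_cases i <;> rfl
  have hs0 : s0 = (![a, b], !![0,1;-1,0]) := by
    show (y, B) = _
    rw [hy]
  have hs5 : s5 = (![b, a], !![0,-1;1,0]) := by
    show muY (muY (muY (muY (muY s0 0) 1) 0) 1) 0 = _
    rw [hs0, stepA1 a b ha hb h1 h2 h3, stepA2 a b ha hb h1 h2 h3,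
      stepA3 a b ha hb h1 h2 h3, stepA4 a b ha hb h1 h2 h3, stepA5 a b ha hb h1 h2 h3]
  constructor
  · refine ⟨?_, ?_, ?_⟩
    · rw [hs5]; rfl
    · rw [hs5]; rfl
    · rw [hs5]
      show !![0,-1;1,0] = -B
      show !![0,-1;1,0] = -(!![0,1;-1,0])
      decide
  · rw [hs5, stepB1 a b ha hb h1 h2 h3, stepB2 a b ha hb h1 h2 h3,
      stepB3 a b ha hb h1 h2 h3, stepB4 a b ha hb h1 h2 h3, stepB5 a b ha hb h1 h2 h3,
      hs0]
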